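/- Let F : E → R be strictly convex and let v_N ⇀ v weakly in L^p((0,T)×Ω; E) with ∫∫ F(v_N) → ∫∫ F(v) and F satisfying p-growth bounds c₁|z|^p − c ≤ F(z) ≤ c₂|z|^p + c, p > 1. Then v_N → v strongly in L^1((0,T)×Ω; E) along a subsequence converging almost everywhere. -/

import Mathlib

open MeasureTheory Filter RealInnerProductSpace
open scoped ENNReal NNReal

set_option linter.unusedSectionVars false
set_option maxHeartbeats 1000000



section Aux

variable {E : Type*} [NormedAddCommGroup E] [InnerProductSpace ℝ E] [FiniteDimensional ℝ E]

theorem aux_continuous {F : E → ℝ} (h : ConvexOn ℝ Set.univ F) : Continuous F := by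
  rw [← continuousOn_univ]
  exact h.continuousOn isOpen_univ

theorem prox_exists {F : E → ℝ} (hcont : Continuous F) {c : ℝ} (hlb : ∀ z, -c ≤ F z)
    {a : ℝ} (ha : 0 < a) (w : E) :
    ∃ P : E, ∀ z : E, F P + a * ‖P - w‖ ^ 2 ≤ F z + a * ‖z - w‖ ^ 2 := by
  set G : E → ℝ := fun z => F z + a * ‖z - w‖ ^ 2 with hG
  have hGcont : Continuous G := by fun_prop
  set R : ℝ := Real.sqrt ((F w + c + 1) / a) with hR
  have hFwc : 0 ≤ F w + c := by have := hlb w; linarith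
  have hRsq : a * R ^ 2 = F w + c + 1 := by
    rw [hR, Real.sq_sqrt (by positivity)]
    field_simp
  obtain ⟨P, hPmem, hPmin⟩ := (isCompact_closedBall w R).exists_isMinOn
    ⟨w, Metric.mem_closedBall_self (Real.sqrt_nonneg _)⟩ hGcont.continuousOn
  refine ⟨P, fun z => ?_⟩
  by_cases hz : z ∈ Metric.closedBall w R
  · exact hPmin hz
  · have hzR : R < ‖z - w‖ := by
      simpa [Metric.mem_closedBall, dist_eq_norm, not_le] using hz
    have h1 : G P ≤ G w := hPmin (Metric.mem_closedBall_self (Real.sqrt_nonneg _))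
    have h2 : G w = F w := by simp [hG]
    have h3 : F w + 1 ≤ G z := by
      have hz2 : R ^ 2 ≤ ‖z - w‖ ^ 2 := by
        have h0 : 0 ≤ R := Real.sqrt_nonneg _
        nlinarith
      have : F w + c + 1 ≤ a * ‖z - w‖ ^ 2 := by
        rw [← hRsq]; nlinarith
      have := hlb z
      simp only [hG]; linarith
    simp only [hG] at h1 h3 ⊢
    simp only [sub_self, norm_zero] at h1
    nlinarith

theorem prox_subgrad {F : E → ℝ} (hconv : ConvexOn ℝ Set.univ F) {a : ℝ} (ha : 0 < a)
    {w P : E} (hmin : ∀ z, F P + a * ‖P - w‖ ^ 2 ≤ F z + a * ‖z - w‖ ^ 2) :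
    ∀ u : E, F P + ⟪(2 * a) • (w - P), u - P⟫ ≤ F u := by
  intro u
  have key : ∀ t : ℝ, t ∈ Set.Ioc (0:ℝ) 1 →
      F P + ⟪(2 * a) • (w - P), u - P⟫ ≤ F u + t * (a * ‖u - P‖ ^ 2) := by
    intro t ⟨ht0, ht1⟩
    have hconvt : F (P + t • (u - P)) ≤ (1 - t) * F P + t * F u := by
      have h := hconv.2 (Set.mem_univ P) (Set.mem_univ u) (by linarith : (0:ℝ) ≤ 1 - t)
        ht0.le (by ring)
      have heq : (1 - t) • P + t • u = P + t • (u - P) := by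
        rw [smul_sub, sub_smul, one_smul]; abel
      rwa [heq] at h
    have hmint := hmin (P + t • (u - P))
    have hnorm : ‖P + t • (u - P) - w‖ ^ 2
        = ‖P - w‖ ^ 2 + 2 * (t * ⟪P - w, u - P⟫) + t ^ 2 * ‖u - P‖ ^ 2 := by
      have : P + t • (u - P) - w = (P - w) + t • (u - P) := by abel
      rw [this, norm_add_sq_real, real_inner_smul_right, norm_smul]
      simp [abs_of_pos ht0, mul_pow]
    have hinner : ⟪(2 * a) • (w - P), u - P⟫ = -(2 * a * ⟪P - w, u - P⟫) := by
      rw [real_inner_smul_left, show w - P = -(P - w) by abel, inner_neg_left]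
      ring
    rw [hinner]
    have h0 : 0 ≤ t * (F u - F P + 2 * a * ⟪P - w, u - P⟫ + a * t * ‖u - P‖ ^ 2) := by
      nlinarith [hmint, hconvt]
    have h1 : 0 ≤ F u - F P + 2 * a * ⟪P - w, u - P⟫ + a * t * ‖u - P‖ ^ 2 :=
      nonneg_of_mul_nonneg_right h0 ht0
    nlinarith
  have htend : Tendsto (fun t : ℝ => F u + t * (a * ‖u - P‖ ^ 2)) (nhdsWithin 0 (Set.Ioi 0))
      (nhds (F u)) := by
    have h : Tendsto (fun t : ℝ => F u + t * (a * ‖u - P‖ ^ 2)) (nhds 0)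
        (nhds (F u + 0 * (a * ‖u - P‖ ^ 2))) :=
      Continuous.tendsto (by continuity) 0
    simpa using h.mono_left nhdsWithin_le_nhds
  refine ge_of_tendsto htend ?_
  filter_upwards [Ioc_mem_nhdsGT_of_mem (by norm_num : (0:ℝ) ∈ Set.Ico (0:ℝ) 1)] with t ht
  exact key t ht

theorem prox_lip {F : E → ℝ} {a : ℝ} (ha : 0 < a) {w₁ w₂ P₁ P₂ : E}
    (h₁ : ∀ u, F P₁ + ⟪(2 * a) • (w₁ - P₁), u - P₁⟫ ≤ F u)
    (h₂ : ∀ u, F P₂ + ⟪(2 * a) • (w₂ - P₂), u - P₂⟫ ≤ F u) :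
    ‖P₁ - P₂‖ ≤ ‖w₁ - w₂‖ := by
  have k₁ := h₁ P₂
  have k₂ := h₂ P₁
  rw [real_inner_smul_left] at k₁ k₂
  have hmono : ⟪w₁ - P₁, P₂ - P₁⟫ + ⟪w₂ - P₂, P₁ - P₂⟫ ≤ 0 := by nlinarith
  have hmono' : ⟪w₂ - P₂, P₁ - P₂⟫ ≤ ⟪w₁ - P₁, P₁ - P₂⟫ := by
    have e : ⟪w₁ - P₁, P₂ - P₁⟫ = -⟪w₁ - P₁, P₁ - P₂⟫ := by
      rw [show P₂ - P₁ = -(P₁ - P₂) by abel, inner_neg_right]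
    linarith [hmono, e.symm.le, e.le]
  have h3 : ⟪P₁ - P₂, P₁ - P₂⟫ ≤ ⟪w₁ - w₂, P₁ - P₂⟫ := by
    have e2 : ⟪w₁ - w₂, P₁ - P₂⟫ = ⟪w₁ - P₁, P₁ - P₂⟫ - ⟪w₂ - P₂, P₁ - P₂⟫ + ⟪P₁ - P₂, P₁ - P₂⟫ := by
      rw [← inner_sub_left, ← inner_add_left]
      congr 1
      abel
    rw [e2]
    linarith
  rw [real_inner_self_eq_norm_sq] at h3
  have h4 : ⟪w₁ - w₂, P₁ - P₂⟫ ≤ ‖w₁ - w₂‖ * ‖P₁ - P₂‖ := real_inner_le_norm _ _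
  nlinarith [norm_nonneg (P₁ - P₂), norm_nonneg (w₁ - w₂)]

end Aux


set_option linter.unusedSectionVars false

section Aux2

variable {E : Type*} [NormedAddCommGroup E] [InnerProductSpace ℝ E] [FiniteDimensional ℝ E]

/-- If `c₁ t^p ≤ C + L t` with `p > 1` then `t` is bounded by an explicit constant. -/
theorem coercive_bound {p c₁ C L : ℝ} (hp : 1 < p) (hc₁ : 0 < c₁) (hC : 0 ≤ C) (hL : 0 ≤ L)
    {t : ℝ} (ht : 0 ≤ t) (hineq : c₁ * t ^ p ≤ C + L * t) :
    t ≤ max 1 (((C + L) / c₁ + 1) ^ (1 / (p - 1))) := by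
  set B : ℝ := (C + L) / c₁ + 1 with hB
  have hB1 : 1 ≤ B := by
    rw [hB]
    have : 0 ≤ (C + L) / c₁ := by positivity
    linarith
  by_contra hcon
  push_neg at hcon
  have ht1 : 1 < t := lt_of_le_of_lt (le_max_left _ _) hcon
  have ht0 : 0 < t := by linarith
  have htB : B ^ (1 / (p - 1)) < t := lt_of_le_of_lt (le_max_right _ _) hcon
  have hp1 : 0 < p - 1 := by linarith
  have hBt : B < t ^ (p - 1) := by
    have h1 : (B ^ (1 / (p - 1))) ^ (p - 1) < t ^ (p - 1) :=
      Real.rpow_lt_rpow (Real.rpow_nonneg (by linarith) _) htB hp1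
    rwa [← Real.rpow_mul (by linarith : (0:ℝ) ≤ B), one_div,
      inv_mul_cancel₀ (ne_of_gt hp1), Real.rpow_one] at h1
  have htp : t ^ p = t ^ (p - 1) * t := by
    have h1 := Real.rpow_add ht0 (p - 1) 1
    rw [Real.rpow_one] at h1
    rw [show p - 1 + 1 = p by ring] at h1
    exact h1
  have h2 : c₁ * t ^ p > (C + L + c₁) * t := by
    rw [htp]
    have : c₁ * B < c₁ * t ^ (p - 1) := by nlinarith
    have hcb : c₁ * B = C + L + c₁ := by
      rw [hB, mul_add, mul_one, mul_div_assoc', mul_comm c₁, mul_div_assoc, div_self hc₁.ne', mul_one]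
    nlinarith
  nlinarith

theorem key_pointwise {F : E → ℝ} (hconv : StrictConvexOn ℝ Set.univ F) (hcont : Continuous F)
    {p c₁ c L : ℝ} (hp : 1 < p) (hc₁ : 0 < c₁)
    (hlow : ∀ z : E, c₁ * ‖z‖ ^ p - c ≤ F z)
    {w : E} {P ξ z : ℕ → E}
    (hP : Tendsto P atTop (nhds w))
    (hξ : ∀ j, ‖ξ j‖ ≤ L)
    (hsub : ∀ j u, F (P j) + ⟪ξ j, u - P j⟫ ≤ F u)
    (hh : Tendsto (fun j => F (z j) - F (P j) - ⟪ξ j, z j - P j⟫) atTop (nhds 0)) :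
    Tendsto z atTop (nhds w) := by
  set h : ℕ → ℝ := fun j => F (z j) - F (P j) - ⟪ξ j, z j - P j⟫ with hhdef
  have hL0 : 0 ≤ L := le_trans (norm_nonneg _) (hξ 0)
  -- bound on ‖z j‖
  obtain ⟨H, hH⟩ := hh.bddAbove_range
  obtain ⟨Mp, hMp⟩ := (hP.norm).bddAbove_range
  obtain ⟨Mf, hMf⟩ := ((hcont.tendsto w).comp hP).bddAbove_range
  set C : ℝ := max 0 (c + H + Mf + L * Mp) with hC
  have hMpnn : ∀ j, ‖P j‖ ≤ Mp := fun j => hMp ⟨j, rfl⟩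
  have hzbd : ∀ j, c₁ * ‖z j‖ ^ p ≤ C + L * ‖z j‖ := by
    intro j
    have h1 : h j ≤ H := hH ⟨j, rfl⟩
    have h2 : F (P j) ≤ Mf := hMf ⟨j, rfl⟩
    have h3 : ⟪ξ j, z j - P j⟫ ≤ L * (‖z j‖ + Mp) := by
      calc ⟪ξ j, z j - P j⟫ ≤ ‖ξ j‖ * ‖z j - P j‖ := real_inner_le_norm _ _
        _ ≤ L * (‖z j‖ + Mp) := by
            have := norm_sub_le (z j) (P j)
            have := hMpnn j
            have := norm_nonneg (z j - P j)
            nlinarith [hξ j]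
    have h4 := hlow (z j)
    have h5 : c + H + Mf + L * Mp ≤ C := le_max_right _ _
    have : F (z j) = h j + F (P j) + ⟪ξ j, z j - P j⟫ := by simp [hhdef]; ring
    nlinarith
  set M : ℝ := max 1 (((C + L) / c₁ + 1) ^ (1 / (p - 1))) with hM
  have hzM : ∀ j, ‖z j‖ ≤ M :=
    fun j => coercive_bound hp hc₁ (le_max_left _ _) hL0 (norm_nonneg _) (hzbd j)
  -- convergence by contradiction
  by_contra hcon
  rw [Metric.tendsto_atTop] at hcon
  push_neg at hcon
  obtain ⟨ε, hε, hfreq⟩ := hcon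
  obtain ⟨φ, hφ, hφε⟩ := extraction_of_frequently_atTop
    (frequently_atTop.2 (fun N => by obtain ⟨j, hj1, hj2⟩ := hfreq N; exact ⟨j, hj1, hj2⟩))
  obtain ⟨z', -, ψ, hψ, hzψ⟩ := tendsto_subseq_of_bounded
    (Metric.isBounded_closedBall (x := (0:E)) (r := M))
    (fun i => by simpa [Metric.mem_closedBall, dist_eq_norm] using hzM (φ i))
  obtain ⟨ξ', -, ψ₂, hψ₂, hξψ⟩ := tendsto_subseq_of_bounded
    (Metric.isBounded_closedBall (x := (0:E)) (r := L))
    (fun i => by simpa [Metric.mem_closedBall, dist_eq_norm] using hξ (φ (ψ i)))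
  set σ : ℕ → ℕ := φ ∘ ψ ∘ ψ₂ with hσ
  have hσmono : StrictMono σ := hφ.comp (hψ.comp hψ₂)
  have hzσ : Tendsto (fun i => z (σ i)) atTop (nhds z') := by
    have : Tendsto ((z ∘ φ ∘ ψ) ∘ ψ₂) atTop (nhds z') := hzψ.comp hψ₂.tendsto_atTop
    exact this
  have hξσ : Tendsto (fun i => ξ (σ i)) atTop (nhds ξ') := hξψ
  have hPσ : Tendsto (fun i => P (σ i)) atTop (nhds w) := hP.comp hσmono.tendsto_atTop
  have hhσ : Tendsto (fun i => h (σ i)) atTop (nhds 0) := hh.comp hσmono.tendsto_atTop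
  -- the distance bound passes to the limit
  have hz'w : ε ≤ dist z' w := by
    have : Tendsto (fun i => dist (z (σ i)) w) atTop (nhds (dist z' w)) :=
      hzσ.dist tendsto_const_nhds
    exact ge_of_tendsto' this (fun i => hφε (ψ (ψ₂ i)))
  have hz'ne : z' ≠ w := by
    intro hzw
    rw [hzw, dist_self] at hz'w
    linarith
  -- limit identities
  have hlim1 : F z' - F w - ⟪ξ', z' - w⟫ = 0 := by
    have ht : Tendsto (fun i => h (σ i)) atTop (nhds (F z' - F w - ⟪ξ', z' - w⟫)) := by
      have h1 : Tendsto (fun i => F (z (σ i))) atTop (nhds (F z')) := (hcont.tendsto z').comp hzσ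
      have h2 : Tendsto (fun i => F (P (σ i))) atTop (nhds (F w)) := (hcont.tendsto w).comp hPσ
      have h3 : Tendsto (fun i => (⟪ξ (σ i), z (σ i) - P (σ i)⟫ : ℝ)) atTop
          (nhds (⟪ξ', z' - w⟫ : ℝ)) := hξσ.inner (hzσ.sub hPσ)
      exact (h1.sub h2).sub h3
    exact tendsto_nhds_unique ht hhσ
  have hlim2 : F w + ⟪ξ', z' - w⟫ / 2 ≤ F ((1/2 : ℝ) • z' + (1/2 : ℝ) • w) := by
    set m : E := (1/2 : ℝ) • z' + (1/2 : ℝ) • w with hm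
    have ht : Tendsto (fun i => F (P (σ i)) + ⟪ξ (σ i), m - P (σ i)⟫) atTop
        (nhds (F w + ⟪ξ', m - w⟫)) := by
      have h2 : Tendsto (fun i => F (P (σ i))) atTop (nhds (F w)) := (hcont.tendsto w).comp hPσ
      exact h2.add (hξσ.inner (tendsto_const_nhds.sub hPσ))
    have hle := le_of_tendsto ht (Eventually.of_forall (fun i => hsub (σ i) m))
    have hmw : m - w = (1/2 : ℝ) • (z' - w) := by
      rw [hm]; module
    rw [hmw, real_inner_smul_right] at hle
    calc F w + ⟪ξ', z' - w⟫ / 2 = F w + 1/2 * ⟪ξ', z' - w⟫ := by ring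
      _ ≤ F m := hle
  have hstrict := hconv.2 (Set.mem_univ z') (Set.mem_univ w) hz'ne
    (by norm_num : (0:ℝ) < 1/2) (by norm_num : (0:ℝ) < 1/2) (by norm_num)
  simp only [smul_eq_mul] at hstrict
  linarith [hlim1, hlim2, hstrict]

end Aux2


/-- If `F` is strictly convex with two-sided `p`-growth, `v_N ⇀ v` weakly in
`L^p((0,T) × Ω; E)` and `∫∫ F(v_N) → ∫∫ F(v)`, then (along a subsequence converging almost
everywhere) `v_N → v` strongly in `L¹((0,T) × Ω; E)`. -/
theorem stmt_4 {d : ℕ} {E : Type*} [NormedAddCommGroup E] [InnerProductSpace ℝ E]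
    [FiniteDimensional ℝ E]
    (Ω : Set (EuclideanSpace ℝ (Fin d))) (hΩm : MeasurableSet Ω)
    (hΩb : Bornology.IsBounded Ω)
    (T p c c₁ c₂ : ℝ) (hT : 0 < T) (hp : 1 < p) (hc₁ : 0 < c₁) (hc₂ : 0 < c₂) (hc : 0 ≤ c)
    (F : E → ℝ) (hconv : StrictConvexOn ℝ Set.univ F)
    (hlow : ∀ z : E, c₁ * ‖z‖ ^ p - c ≤ F z)
    (hup : ∀ z : E, F z ≤ c₂ * ‖z‖ ^ p + c)
    (v : ℕ → ℝ × EuclideanSpace ℝ (Fin d) → E)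
    (vlim : ℝ × EuclideanSpace ℝ (Fin d) → E)
    (μ : Measure (ℝ × EuclideanSpace ℝ (Fin d)))
    (hμ : μ = (volume.restrict (Set.Ioo 0 T)).prod (volume.restrict Ω))
    (hmem : ∀ N, MemLp (v N) (ENNReal.ofReal p) μ)
    (hmeml : MemLp vlim (ENNReal.ofReal p) μ)
    (hweak : ∀ g : ℝ × EuclideanSpace ℝ (Fin d) → E,
      MemLp g (ENNReal.ofReal (p / (p - 1))) μ →
      Tendsto (fun N => ∫ q, (inner ℝ (v N q) (g q) : ℝ) ∂μ) atTop
        (nhds (∫ q, (inner ℝ (vlim q) (g q) : ℝ) ∂μ)))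
    (hF : Tendsto (fun N => ∫ q, F (v N q) ∂μ) atTop (nhds (∫ q, F (vlim q) ∂μ))) :
    ∃ φ : ℕ → ℕ, StrictMono φ ∧
      (∀ᵐ q ∂μ, Tendsto (fun k => v (φ k) q) atTop (nhds (vlim q))) ∧
      Tendsto (fun k => ∫ q, ‖v (φ k) q - vlim q‖ ∂μ) atTop (nhds 0) := by
  -- finiteness of the measure
  haveI hμfin : IsFiniteMeasure μ := by
    rw [hμ]
    haveI h1 : IsFiniteMeasure (volume.restrict (Set.Ioo 0 T)) :=
      ⟨by rw [Measure.restrict_apply_univ]; exact measure_Ioo_lt_top⟩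
    haveI h2 : IsFiniteMeasure (volume.restrict Ω) :=
      ⟨by rw [Measure.restrict_apply_univ]; exact hΩb.measure_lt_top⟩
    infer_instance
  clear hμ hΩm hΩb hT
  -- basic exponent facts
  have hp0 : 0 < p := lt_trans one_pos hp
  have hp10 : 0 < p - 1 := by linarith
  set pp : ℝ≥0∞ := ENNReal.ofReal p with hppdef
  set pq : ℝ≥0∞ := ENNReal.ofReal (p / (p - 1)) with hpqdef
  have hpp1 : 1 ≤ pp := by
    rw [hppdef, show (1:ℝ≥0∞) = ENNReal.ofReal 1 by simp]
    exact ENNReal.ofReal_le_ofReal hp.le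
  have hpp0 : pp ≠ 0 := by
    rw [hppdef]; simp only [ne_eq, ENNReal.ofReal_eq_zero, not_le]; linarith
  have hppt : pp ≠ ⊤ := ENNReal.ofReal_ne_top
  have hpptoReal : pp.toReal = p := ENNReal.toReal_ofReal hp0.le
  have hconj : (1:ℝ≥0∞) / 1 = 1 / pq + 1 / pp := by
    rw [hpqdef, hppdef, one_div, one_div, one_div,
      ← ENNReal.ofReal_inv_of_pos (by positivity : 0 < p / (p-1)),
      ← ENNReal.ofReal_inv_of_pos hp0, ← ENNReal.ofReal_add (by positivity) (by positivity)]
    rw [inv_one, show (p / (p-1))⁻¹ + p⁻¹ = 1 by field_simp; ring]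
    simp
  -- continuity of F and basic bounds
  have hFc : Continuous F := aux_continuous hconv.convexOn
  have hcnneg : ∀ z : E, -c ≤ F z := fun z => by
    have h1 := hlow z
    have h2 : 0 ≤ c₁ * ‖z‖ ^ p := by positivity
    linarith
  have habs : ∀ z : E, |F z| ≤ c₂ * ‖z‖ ^ p + c := fun z => by
    rw [abs_le]
    constructor
    · have := hcnneg z
      have h2 : 0 ≤ c₂ * ‖z‖ ^ p := by positivity
      linarith
    · exact hup z
  -- integrability of p-th powers and of F ∘ f
  have hnormp_int : ∀ f : ℝ × EuclideanSpace ℝ (Fin d) → E, MemLp f pp μ →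
      Integrable (fun q => ‖f q‖ ^ p) μ := by
    intro f hf
    have := hf.norm_rpow hpp0 hppt
    rw [hpptoReal] at this
    exact memLp_one_iff_integrable.1 this
  have hFint : ∀ f : ℝ × EuclideanSpace ℝ (Fin d) → E, MemLp f pp μ →
      Integrable (fun q => F (f q)) μ := by
    intro f hf
    refine Integrable.mono' (((hnormp_int f hf).const_mul c₂).add (integrable_const c))
      (hFc.comp_aestronglyMeasurable hf.1) (ae_of_all _ fun q => ?_)
    simpa [Real.norm_eq_abs] using habs (f q)
  -- the proximal maps
  have hexP : ∀ (k : ℕ) (w : E), ∃ P : E, ∀ z : E,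
      F P + ((k:ℝ)+1) * ‖P - w‖ ^ 2 ≤ F z + ((k:ℝ)+1) * ‖z - w‖ ^ 2 := fun k w =>
    prox_exists hFc hcnneg (by positivity) w
  choose P hPmin using hexP
  set ξ : ℕ → E → E := fun k w => (2 * ((k:ℝ)+1)) • (w - P k w) with hξdef
  have hsub : ∀ (k : ℕ) (w u : E), F (P k w) + ⟪ξ k w, u - P k w⟫ ≤ F u := fun k w u =>
    prox_subgrad hconv.convexOn (by positivity) (hPmin k w) u
  have hFP_le : ∀ (k : ℕ) (w : E), F (P k w) ≤ F w := by
    intro k w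
    have h1 := hPmin k w w
    simp only [sub_self, norm_zero] at h1
    nlinarith [sq_nonneg ‖P k w - w‖, (show (0:ℝ) < (k:ℝ)+1 by positivity)]
  have hPdist : ∀ (k : ℕ) (w : E), ‖P k w - w‖ ^ 2 ≤ (F w + c) / ((k:ℝ)+1) := by
    intro k w
    have h1 := hPmin k w w
    simp only [sub_self, norm_zero] at h1
    have h2 := hcnneg (P k w)
    rw [le_div_iff₀ (by positivity : (0:ℝ) < (k:ℝ)+1)]
    nlinarith
  -- norm bounds
  set K₀ : ℝ := ((c₂ + 2*c)/c₁) ^ p⁻¹ with hK₀def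
  have hK₀0 : 0 ≤ K₀ := Real.rpow_nonneg (by positivity) _
  have h1le : ∀ w : E, (1:ℝ) ≤ (1 + ‖w‖) ^ p := by
    intro w
    calc (1:ℝ) = 1 ^ p := (Real.one_rpow p).symm
      _ ≤ (1 + ‖w‖) ^ p := Real.rpow_le_rpow zero_le_one (by linarith [norm_nonneg w]) hp0.le
  have hPnorm : ∀ (k : ℕ) (w : E), ‖P k w‖ ≤ K₀ * (1 + ‖w‖) := by
    intro k w
    have h0 : (0:ℝ) < 1 + ‖w‖ := by positivity
    have h1 : c₁ * ‖P k w‖ ^ p ≤ (c₂ + 2*c) * (1 + ‖w‖) ^ p := by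
      have hfp := hFP_le k w
      have h2 := hlow (P k w)
      have h3 := hup w
      have h4 : ‖w‖ ^ p ≤ (1 + ‖w‖) ^ p :=
        Real.rpow_le_rpow (norm_nonneg w) (by linarith) hp0.le
      have h5 := h1le w
      nlinarith
    have h6 : ‖P k w‖ ^ p ≤ ((c₂ + 2*c)/c₁) * (1 + ‖w‖) ^ p := by
      rw [div_mul_eq_mul_div, le_div_iff₀ hc₁]
      nlinarith
    calc ‖P k w‖ = (‖P k w‖ ^ p) ^ p⁻¹ :=
          (Real.rpow_rpow_inv (norm_nonneg _) (ne_of_gt hp0)).symm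
      _ ≤ (((c₂ + 2*c)/c₁) * (1 + ‖w‖) ^ p) ^ p⁻¹ :=
          Real.rpow_le_rpow (Real.rpow_nonneg (norm_nonneg _) p) h6 (by positivity)
      _ = K₀ * (1 + ‖w‖) := by
          rw [Real.mul_rpow (by positivity) (Real.rpow_nonneg h0.le p),
            Real.rpow_rpow_inv h0.le (ne_of_gt hp0), hK₀def]
  set K₂ : ℝ := c₂ * (K₀ + 1) ^ p + 2*c with hK₂def
  have hK₂0 : 0 ≤ K₂ := by
    have : (0:ℝ) ≤ (K₀ + 1) ^ p := Real.rpow_nonneg (by linarith) _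
    nlinarith
  have hξnorm : ∀ (k : ℕ) (w : E), ‖ξ k w‖ ≤ K₂ * (1 + ‖w‖) ^ (p - 1) := by
    intro k w
    have h0 : (0:ℝ) < 1 + ‖w‖ := by positivity
    have hrnn : (0:ℝ) ≤ (1 + ‖w‖) ^ (p - 1) := Real.rpow_nonneg h0.le _
    rcases eq_or_ne (ξ k w) 0 with h | h
    · rw [h, norm_zero]
      exact mul_nonneg hK₂0 hrnn
    · have hξpos : (0:ℝ) < ‖ξ k w‖ := norm_pos_iff.2 h
      set u : E := ‖ξ k w‖⁻¹ • ξ k w with hu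
      have hunorm : ‖u‖ = 1 := by
        rw [hu, norm_smul, norm_inv, norm_norm, inv_mul_cancel₀ (ne_of_gt hξpos)]
      have hkey := hsub k w (P k w + (1 + ‖w‖) • u)
      have hinner : ⟪ξ k w, P k w + (1 + ‖w‖) • u - P k w⟫ = (1 + ‖w‖) * ‖ξ k w‖ := by
        rw [show P k w + (1 + ‖w‖) • u - P k w = (1 + ‖w‖) • u by abel, real_inner_smul_right, hu,
          real_inner_smul_right, real_inner_self_eq_norm_sq]
        field_simp
      rw [hinner] at hkey
      have hFub : F (P k w + (1 + ‖w‖) • u) ≤ c₂ * ((K₀ + 1) ^ p * (1 + ‖w‖) ^ p) + c := by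
        have h1 := hup (P k w + (1 + ‖w‖) • u)
        have h2 : ‖P k w + (1 + ‖w‖) • u‖ ≤ (K₀ + 1) * (1 + ‖w‖) := by
          calc ‖P k w + (1 + ‖w‖) • u‖ ≤ ‖P k w‖ + ‖(1 + ‖w‖) • u‖ := norm_add_le _ _
            _ ≤ K₀ * (1 + ‖w‖) + (1 + ‖w‖) := by
                rw [norm_smul, hunorm, mul_one, Real.norm_of_nonneg h0.le]
                exact add_le_add_left (hPnorm k w) _
            _ = (K₀ + 1) * (1 + ‖w‖) := by ring
        have h3 : ‖P k w + (1 + ‖w‖) • u‖ ^ p ≤ ((K₀ + 1) * (1 + ‖w‖)) ^ p :=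
          Real.rpow_le_rpow (norm_nonneg _) h2 hp0.le
        rw [Real.mul_rpow (by linarith) h0.le] at h3
        nlinarith [Real.rpow_nonneg (norm_nonneg (P k w + (1 + ‖w‖) • u)) p]
      have hFlb : -c ≤ F (P k w) := hcnneg (P k w)
      have hmain : (1 + ‖w‖) * ‖ξ k w‖ ≤ K₂ * (1 + ‖w‖) ^ p := by
        have h5 := h1le w
        have h6 : (0:ℝ) ≤ (K₀ + 1) ^ p := Real.rpow_nonneg (by linarith) _
        rw [hK₂def]
        nlinarith
      have hsplit : (1 + ‖w‖) ^ p = (1 + ‖w‖) ^ (p - 1) * (1 + ‖w‖) := by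
        have h1 := Real.rpow_add h0 (p - 1) 1
        rw [Real.rpow_one] at h1
        rw [show p - 1 + 1 = p by ring] at h1
        exact h1
      rw [hsplit] at hmain
      have hfin : ‖ξ k w‖ * (1 + ‖w‖) ≤ (K₂ * (1 + ‖w‖) ^ (p - 1)) * (1 + ‖w‖) := by
        nlinarith [hmain]
      exact le_of_mul_le_mul_right hfin h0
  -- continuity of the proximal maps
  have hPcont : ∀ k : ℕ, Continuous (P k) := by
    intro k
    refine (LipschitzWith.of_dist_le_mul (K := 1) fun w₁ w₂ => ?_).continuous
    have := prox_lip (F := F) (a := (k:ℝ)+1) (by positivity)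
      (fun u => hsub k w₁ u) (fun u => hsub k w₂ u)
    simpa [dist_eq_norm] using this
  have hξcont : ∀ k : ℕ, Continuous (ξ k) := fun k =>
    continuous_const.smul (continuous_id.sub (hPcont k))
  -- the test functions
  set g : ℕ → ℝ × EuclideanSpace ℝ (Fin d) → E := fun k q => ξ k (vlim q) with hgdef
  set Pl : ℕ → ℝ × EuclideanSpace ℝ (Fin d) → E := fun k q => P k (vlim q) with hPldef
  have hone : MemLp (fun q => 1 + ‖vlim q‖) pp μ := (memLp_const (1:ℝ)).add hmeml.norm
  have hPl_meas : ∀ k, AEStronglyMeasurable (Pl k) μ := fun k =>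
    (hPcont k).comp_aestronglyMeasurable hmeml.1
  have hg_meas : ∀ k, AEStronglyMeasurable (g k) μ := fun k =>
    (hξcont k).comp_aestronglyMeasurable hmeml.1
  have hPl_mem : ∀ k, MemLp (Pl k) pp μ := by
    intro k
    refine MemLp.of_le (hone.const_mul K₀) (hPl_meas k) (ae_of_all _ fun q => ?_)
    have h1 := hPnorm k (vlim q)
    have h2 : (0:ℝ) ≤ K₀ * (1 + ‖vlim q‖) := by positivity
    rw [Real.norm_eq_abs, abs_of_nonneg h2]
    exact h1
  have hgrow : MemLp (fun q => (1 + ‖vlim q‖) ^ (p - 1)) pq μ := by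
    have h1 := hone.norm_rpow_div (ENNReal.ofReal (p-1))
    have heq : (fun q => ‖1 + ‖vlim q‖‖ ^ ((ENNReal.ofReal (p-1)).toReal))
        = fun q => (1 + ‖vlim q‖) ^ (p - 1) := by
      funext q
      rw [ENNReal.toReal_ofReal (by linarith : (0:ℝ) ≤ p - 1),
        Real.norm_of_nonneg (by positivity)]
    rw [heq] at h1
    have hexp : pp / ENNReal.ofReal (p-1) = pq := by
      rw [hpqdef, hppdef, ENNReal.ofReal_div_of_pos hp10]
    rwa [hexp] at h1
  have hg_mem : ∀ k, MemLp (g k) pq μ := by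
    intro k
    refine MemLp.of_le (hgrow.const_mul K₂) (hg_meas k) (ae_of_all _ fun q => ?_)
    have h1 := hξnorm k (vlim q)
    have h2 : (0:ℝ) ≤ K₂ * (1 + ‖vlim q‖) ^ (p-1) := by
      have : (0:ℝ) ≤ (1 + ‖vlim q‖) ^ (p-1) := Real.rpow_nonneg (by positivity) _
      nlinarith
    rw [Real.norm_eq_abs, abs_of_nonneg h2]
    exact h1
  -- integrability of the various integrands
  have int_Fv : ∀ N, Integrable (fun q => F (v N q)) μ := fun N => hFint (v N) (hmem N)
  have int_Fl : Integrable (fun q => F (vlim q)) μ := hFint vlim hmeml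
  have int_FPl : ∀ k, Integrable (fun q => F (Pl k q)) μ := fun k => hFint (Pl k) (hPl_mem k)
  have int_inn : ∀ k (f : ℝ × EuclideanSpace ℝ (Fin d) → E), MemLp f pp μ →
      Integrable (fun q => (⟪g k q, f q⟫ : ℝ)) μ := by
    intro k f hf
    have hmul : MemLp ((fun q => ‖g k q‖) • (fun q => ‖f q‖)) 1 μ :=
      by haveI : ENNReal.HolderTriple pq pp 1 := ⟨by simpa only [one_div, inv_one] using hconj.symm⟩; exact MemLp.smul hf.norm (hg_mem k).norm
    refine (memLp_one_iff_integrable.1 hmul).mono' ((hg_meas k).inner hf.1)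
      (ae_of_all _ fun q => ?_)
    rw [Real.norm_eq_abs]
    exact abs_real_inner_le_norm _ _
  -- splitting inner products
  have hinn_split : ∀ k (f f' : ℝ × EuclideanSpace ℝ (Fin d) → E),
      (fun q => (⟪g k q, f q - f' q⟫ : ℝ))
        = fun q => (⟪g k q, f q⟫ : ℝ) - (⟪g k q, f' q⟫ : ℝ) := by
    intro k f f'
    funext q
    rw [inner_sub_right]
  have int_h : ∀ (k N : ℕ), Integrable
      (fun q => F (v N q) - F (Pl k q) - ⟪g k q, v N q - Pl k q⟫) μ := by
    intro k N
    refine ((int_Fv N).sub (int_FPl k)).sub ?_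
    rw [hinn_split k (v N) (Pl k)]
    exact (int_inn k (v N) (hmem N)).sub (int_inn k (Pl k) (hPl_mem k))
  have hInt_eq : ∀ k (f : ℝ × EuclideanSpace ℝ (Fin d) → E), MemLp f pp μ →
      (∫ q, (F (f q) - F (Pl k q) - ⟪g k q, f q - Pl k q⟫) ∂μ)
      = (∫ q, F (f q) ∂μ) - (∫ q, F (Pl k q) ∂μ)
        - ((∫ q, (⟪g k q, f q⟫ : ℝ) ∂μ) - (∫ q, (⟪g k q, Pl k q⟫ : ℝ) ∂μ)) := by
    intro k f hf
    have e1 : (∫ q, (F (f q) - F (Pl k q) - ⟪g k q, f q - Pl k q⟫) ∂μ)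
        = ∫ q, ((F (f q) - F (Pl k q)) - ((⟪g k q, f q⟫ : ℝ) - (⟪g k q, Pl k q⟫ : ℝ))) ∂μ := by
      congr 1
      funext q
      rw [inner_sub_right]
    have i1 : Integrable (fun q => F (f q) - F (Pl k q)) μ := (hFint f hf).sub (int_FPl k)
    have i2 : Integrable (fun q => (⟪g k q, f q⟫ : ℝ) - (⟪g k q, Pl k q⟫ : ℝ)) μ :=
      (int_inn k f hf).sub (int_inn k (Pl k) (hPl_mem k))
    rw [e1, integral_sub i1 i2, integral_sub (hFint f hf) (int_FPl k),
      integral_sub (int_inn k f hf) (int_inn k (Pl k) (hPl_mem k))]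
  -- limit in N for fixed k
  have hAtend : ∀ k, Tendsto
      (fun N => ∫ q, (F (v N q) - F (Pl k q) - ⟪g k q, v N q - Pl k q⟫) ∂μ) atTop
      (nhds (∫ q, (F (vlim q) - F (Pl k q) - ⟪g k q, vlim q - Pl k q⟫) ∂μ)) := by
    intro k
    have hw := hweak (g k) (hg_mem k)
    have e : ∀ f : ℝ × EuclideanSpace ℝ (Fin d) → E,
        (∫ q, (inner ℝ (f q) (g k q) : ℝ) ∂μ) = ∫ q, (⟪g k q, f q⟫ : ℝ) ∂μ := by
      intro f
      congr 1
      funext q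
      rw [real_inner_comm]
    simp only [e] at hw
    have h1 : (fun N => ∫ q, (F (v N q) - F (Pl k q) - ⟪g k q, v N q - Pl k q⟫) ∂μ)
        = fun N => (∫ q, F (v N q) ∂μ) - (∫ q, F (Pl k q) ∂μ)
          - ((∫ q, (⟪g k q, v N q⟫ : ℝ) ∂μ) - (∫ q, (⟪g k q, Pl k q⟫ : ℝ) ∂μ)) :=
      funext fun N => hInt_eq k (v N) (hmem N)
    rw [h1, hInt_eq k vlim hmeml]
    exact (hF.sub tendsto_const_nhds).sub (hw.sub tendsto_const_nhds)
  -- nonnegativity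
  have hA_nonneg : ∀ k (f : ℝ × EuclideanSpace ℝ (Fin d) → E) (q : ℝ × EuclideanSpace ℝ (Fin d)),
      0 ≤ F (f q) - F (Pl k q) - ⟪g k q, f q - Pl k q⟫ := by
    intro k f q
    have := hsub k (vlim q) (f q)
    simp only [hPldef, hgdef]
    linarith
  -- pointwise convergence of the proximal regularizations
  have hPtend : ∀ (w : E) (κ : ℕ → ℕ), StrictMono κ →
      Tendsto (fun j => P (κ j) w) atTop (nhds w) := by
    intro w κ hκ
    rw [tendsto_iff_norm_sub_tendsto_zero]
    have hFwc : 0 ≤ F w + c := by linarith [hcnneg w]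
    have hb : ∀ j, ‖P (κ j) w - w‖ ≤ Real.sqrt ((F w + c) / ((j:ℝ)+1)) := by
      intro j
      have h1 := hPdist (κ j) w
      have h2 : (F w + c) / ((κ j : ℝ)+1) ≤ (F w + c) / ((j:ℝ)+1) := by
        have hjk : j ≤ κ j := hκ.le_apply
        have hjk' : (j:ℝ) ≤ (κ j : ℝ) := by exact_mod_cast hjk
        apply div_le_div_of_nonneg_left hFwc (by positivity)
        linarith
      have h3 : ‖P (κ j) w - w‖ = Real.sqrt (‖P (κ j) w - w‖^2) :=
        (Real.sqrt_sq (norm_nonneg _)).symm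
      rw [h3]
      exact Real.sqrt_le_sqrt (le_trans h1 h2)
    refine squeeze_zero (fun j => norm_nonneg _) hb ?_
    have h4 : Tendsto (fun j : ℕ => (F w + c) / ((j:ℝ)+1)) atTop (nhds 0) :=
      Tendsto.div_atTop tendsto_const_nhds
        (tendsto_atTop_add_const_right _ 1 tendsto_natCast_atTop_atTop)
    have h5 := (Real.continuous_sqrt.tendsto 0).comp h4
    simpa [Function.comp_def] using h5
  -- δ k and its limit
  set δ : ℕ → ℝ := fun k => ∫ q, (F (vlim q) - F (Pl k q) - ⟪g k q, vlim q - Pl k q⟫) ∂μ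
    with hδdef
  have int_1vp : Integrable (fun q => (1 + ‖vlim q‖ : ℝ) ^ p) μ := by
    have h1 := hone.norm_rpow hpp0 hppt
    rw [hpptoReal] at h1
    refine (memLp_one_iff_integrable.1 h1).congr (ae_of_all _ fun q => ?_)
    simp [Real.norm_eq_abs, abs_of_nonneg (by positivity : (0:ℝ) ≤ 1 + ‖vlim q‖)]
  have hδlim : Tendsto δ atTop (nhds 0) := by
    have hbdd : Integrable
        (fun q => c₂ * ‖vlim q‖ ^ p + 2*c + K₂ * (K₀+1) * (1 + ‖vlim q‖) ^ p) μ :=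
      (((hnormp_int vlim hmeml).const_mul c₂).add (integrable_const (2*c))).add
        (int_1vp.const_mul (K₂ * (K₀+1)))
    have hmeas : ∀ k : ℕ, AEStronglyMeasurable
        (fun q => F (vlim q) - F (Pl k q) - ⟪g k q, vlim q - Pl k q⟫) μ := fun k =>
      ((hFc.comp_aestronglyMeasurable hmeml.1).sub
        (hFc.comp_aestronglyMeasurable (hPl_meas k))).sub
        ((hg_meas k).inner (hmeml.1.sub (hPl_meas k)))
    have hbound : ∀ k : ℕ, ∀ᵐ q ∂μ, ‖F (vlim q) - F (Pl k q) - ⟪g k q, vlim q - Pl k q⟫‖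
        ≤ c₂ * ‖vlim q‖ ^ p + 2*c + K₂ * (K₀+1) * (1 + ‖vlim q‖) ^ p := by
      intro k
      refine ae_of_all _ fun q => ?_
      have hnn := hA_nonneg k vlim q
      rw [Real.norm_of_nonneg hnn]
      have h0 : (0:ℝ) < 1 + ‖vlim q‖ := by positivity
      have h1 : F (vlim q) - F (Pl k q) ≤ c₂ * ‖vlim q‖ ^ p + 2*c := by
        have := hcnneg (Pl k q)
        have := hup (vlim q)
        simp only [hPldef] at *
        linarith
      have h2 : |(⟪g k q, vlim q - Pl k q⟫ : ℝ)| ≤ K₂ * (K₀+1) * (1 + ‖vlim q‖) ^ p := by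
        have h3 : |(⟪g k q, vlim q - Pl k q⟫ : ℝ)| ≤ ‖g k q‖ * ‖vlim q - Pl k q‖ :=
          abs_real_inner_le_norm _ _
        have h4 : ‖g k q‖ ≤ K₂ * (1 + ‖vlim q‖) ^ (p-1) := hξnorm k (vlim q)
        have h5 : ‖vlim q - Pl k q‖ ≤ (K₀+1) * (1 + ‖vlim q‖) := by
          calc ‖vlim q - Pl k q‖ ≤ ‖vlim q‖ + ‖Pl k q‖ := norm_sub_le _ _
            _ ≤ ‖vlim q‖ + K₀ * (1 + ‖vlim q‖) := by
                have := hPnorm k (vlim q)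
                simp only [hPldef]
                linarith
            _ ≤ (K₀+1) * (1 + ‖vlim q‖) := by nlinarith [norm_nonneg (vlim q)]
        have hsplit : (1 + ‖vlim q‖) ^ p = (1 + ‖vlim q‖) ^ (p - 1) * (1 + ‖vlim q‖) := by
          have h6 := Real.rpow_add h0 (p - 1) 1
          rw [Real.rpow_one] at h6
          rw [show p - 1 + 1 = p by ring] at h6
          exact h6
        have hrnn : (0:ℝ) ≤ (1 + ‖vlim q‖) ^ (p-1) := Real.rpow_nonneg h0.le _
        calc |(⟪g k q, vlim q - Pl k q⟫ : ℝ)| ≤ ‖g k q‖ * ‖vlim q - Pl k q‖ := h3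
          _ ≤ (K₂ * (1 + ‖vlim q‖) ^ (p-1)) * ((K₀+1) * (1 + ‖vlim q‖)) := by
              apply mul_le_mul h4 h5 (norm_nonneg _)
              positivity
          _ = K₂ * (K₀+1) * ((1 + ‖vlim q‖) ^ (p-1) * (1 + ‖vlim q‖)) := by ring
          _ = K₂ * (K₀+1) * (1 + ‖vlim q‖) ^ p := by rw [← hsplit]
      have h7 := neg_abs_le (⟪g k q, vlim q - Pl k q⟫ : ℝ)
      linarith [abs_nonneg (⟪g k q, vlim q - Pl k q⟫ : ℝ)]
    have hptwise : ∀ᵐ q ∂μ, Tendsto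
        (fun k => F (vlim q) - F (Pl k q) - ⟪g k q, vlim q - Pl k q⟫) atTop (nhds 0) := by
      refine ae_of_all _ fun q => ?_
      have hP : Tendsto (fun k => Pl k q) atTop (nhds (vlim q)) := by
        simp only [hPldef]
        exact hPtend (vlim q) id strictMono_id
      have h1 : Tendsto (fun k => F (vlim q) - F (Pl k q)) atTop (nhds 0) := by
        have h2 := (hFc.tendsto (vlim q)).comp hP
        have h3 : Tendsto (fun _ : ℕ => F (vlim q)) atTop (nhds (F (vlim q))) :=
          tendsto_const_nhds
        simpa using h3.sub h2
      have h2 : Tendsto (fun k => (⟪g k q, vlim q - Pl k q⟫ : ℝ)) atTop (nhds 0) := by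
        have hb : ∀ k, ‖(⟪g k q, vlim q - Pl k q⟫ : ℝ)‖
            ≤ K₂ * (1 + ‖vlim q‖)^(p-1) * ‖vlim q - Pl k q‖ := by
          intro k
          rw [Real.norm_eq_abs]
          calc |(⟪g k q, vlim q - Pl k q⟫ : ℝ)| ≤ ‖g k q‖ * ‖vlim q - Pl k q‖ :=
              abs_real_inner_le_norm _ _
            _ ≤ K₂ * (1 + ‖vlim q‖)^(p-1) * ‖vlim q - Pl k q‖ :=
              mul_le_mul_of_nonneg_right (hξnorm k (vlim q)) (norm_nonneg _)
        refine squeeze_zero_norm hb ?_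
        · have h4 : Tendsto (fun k => ‖vlim q - Pl k q‖) atTop (nhds 0) := by
            have h5 := tendsto_iff_norm_sub_tendsto_zero.1 hP
            refine h5.congr fun k => ?_
            rw [← norm_neg]
            congr 1
            abel
          have h6 := h4.const_mul (K₂ * (1 + ‖vlim q‖)^(p-1))
          simpa [mul_comm] using h6
      simpa using h1.sub h2
    have hdc := tendsto_integral_of_dominated_convergence _ hmeas hbdd hbound hptwise
    simpa using hdc
  -- diagonal extraction
  obtain ⟨κ, hκmono, hκlt⟩ := extraction_forall_of_eventually
    (fun j : ℕ => hδlim.eventually_lt_const (by positivity : (0:ℝ) < (1/2)^j))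
  have hev2 : ∀ j : ℕ, ∀ᶠ N in atTop,
      (∫ q, (F (v N q) - F (Pl (κ j) q) - ⟪g (κ j) q, v N q - Pl (κ j) q⟫) ∂μ)
        < 2 * (1/2)^j := by
    intro j
    apply (hAtend (κ j)).eventually_lt_const
    have h1 : (0:ℝ) < (1/2)^j := by positivity
    have h2 := hκlt j
    rw [hδdef] at h2
    linarith
  obtain ⟨φ, hφmono, hφlt⟩ := extraction_forall_of_eventually hev2
  -- the nonnegative error functions
  set h : ℕ → ℝ × EuclideanSpace ℝ (Fin d) → ℝ :=
    fun j q => F (v (φ j) q) - F (Pl (κ j) q) - ⟪g (κ j) q, v (φ j) q - Pl (κ j) q⟫ with hhdef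
  have hh_nonneg : ∀ j q, 0 ≤ h j q := fun j q => hA_nonneg (κ j) (v (φ j)) q
  have hh_int : ∀ j, Integrable (h j) μ := fun j => int_h (κ j) (φ j)
  have hh_lint : ∀ j, ∫⁻ q, ENNReal.ofReal (h j q) ∂μ = ENNReal.ofReal (∫ q, h j q ∂μ) :=
    fun j => (ofReal_integral_eq_lintegral_ofReal (hh_int j) (ae_of_all _ (hh_nonneg j))).symm
  have hh_meas : ∀ j, AEMeasurable (fun q => ENNReal.ofReal (h j q)) μ := fun j =>
    ((hh_int j).aestronglyMeasurable.aemeasurable).ennreal_ofReal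
  have hsumfin : ∫⁻ q, (∑' j, ENNReal.ofReal (h j q)) ∂μ < ⊤ := by
    rw [lintegral_tsum hh_meas]
    have hgeo : ∑' j : ℕ, (ENNReal.ofReal 2) * (ENNReal.ofReal (1/2))^j < ⊤ := by
      rw [ENNReal.tsum_mul_left, ENNReal.tsum_geometric]
      refine ENNReal.mul_lt_top (by simp) ?_
      rw [lt_top_iff_ne_top, ne_eq, ENNReal.inv_eq_top, tsub_eq_zero_iff_le]
      rw [← ENNReal.ofReal_one]
      exact fun hcon => absurd (ENNReal.ofReal_le_ofReal_iff (by norm_num) |>.1 hcon) (by norm_num)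
    refine lt_of_le_of_lt (ENNReal.tsum_le_tsum fun j => ?_) hgeo
    rw [hh_lint j, ← ENNReal.ofReal_pow (by norm_num : (0:ℝ) ≤ 1/2),
      ← ENNReal.ofReal_mul (by norm_num : (0:ℝ) ≤ 2)]
    exact ENNReal.ofReal_le_ofReal (hφlt j).le
  have haes : ∀ᵐ q ∂μ, Tendsto (fun j => h j q) atTop (nhds 0) := by
    have h1 : ∀ᵐ q ∂μ, (∑' j, ENNReal.ofReal (h j q)) < ⊤ :=
      ae_lt_top' (AEMeasurable.ennreal_tsum hh_meas) hsumfin.ne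
    filter_upwards [h1] with q hq
    have h2 : Tendsto (fun j => ENNReal.ofReal (h j q)) atTop (nhds 0) :=
      ENNReal.tendsto_atTop_zero_of_tsum_ne_top hq.ne
    have h3 := (ENNReal.tendsto_toReal (by simp : (0:ℝ≥0∞) ≠ ⊤)).comp h2
    have h4 := h3.congr fun j => ENNReal.toReal_ofReal (hh_nonneg j q)
    simpa using h4
  -- almost everywhere convergence via the key pointwise lemma
  have haecv : ∀ᵐ q ∂μ, Tendsto (fun j => v (φ j) q) atTop (nhds (vlim q)) := by
    filter_upwards [haes] with q hq
    exact key_pointwise hconv hFc hp hc₁ hlow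
      (hPtend (vlim q) κ hκmono)
      (fun j => hξnorm (κ j) (vlim q))
      (fun j u => hsub (κ j) (vlim q) u)
      hq
  -- L¹ convergence
  have hL1 : Tendsto (fun j => ∫ q, ‖v (φ j) q - vlim q‖ ∂μ) atTop (nhds 0) := by
    -- generalized dominated convergence (Pratt's lemma), done in ℝ≥0∞
    set u : ℕ → ℝ × EuclideanSpace ℝ (Fin d) → ℝ := fun j q => ‖v (φ j) q - vlim q‖ with hudef
    set B : ℝ × EuclideanSpace ℝ (Fin d) → ℝ := fun q => 1 + c/c₁ + ‖vlim q‖ with hBdef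
    set G : ℕ → ℝ × EuclideanSpace ℝ (Fin d) → ℝ := fun j q => B q + F (v (φ j) q)/c₁ with hGdef
    set Gl : ℝ × EuclideanSpace ℝ (Fin d) → ℝ := fun q => B q + F (vlim q)/c₁ with hGldef
    have hself : ∀ (f : ℝ × EuclideanSpace ℝ (Fin d) → E) (q), MemLp f pp μ →
        ‖f q‖ ≤ 1 + (F (f q) + c)/c₁ := by
      intro f q _
      have h1 : ‖f q‖ ≤ 1 + ‖f q‖ ^ p := by
        rcases le_or_gt ‖f q‖ 1 with h | h
        · have : (0:ℝ) ≤ ‖f q‖ ^ p := Real.rpow_nonneg (norm_nonneg _) _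
          linarith
        · have h2 : ‖f q‖ = ‖f q‖ ^ (1:ℝ) := (Real.rpow_one _).symm
          nth_rewrite 1 [h2]
          have := Real.rpow_le_rpow_of_exponent_le h.le hp.le
          linarith
      have h3 : ‖f q‖ ^ p ≤ (F (f q) + c)/c₁ := by
        rw [le_div_iff₀ hc₁]
        have := hlow (f q)
        linarith [mul_comm c₁ (‖f q‖ ^ p)]
      linarith
    have hdom : ∀ j q, u j q ≤ G j q := by
      intro j q
      have h1 : u j q ≤ ‖v (φ j) q‖ + ‖vlim q‖ := norm_sub_le _ _
      have h2 := hself (v (φ j)) q (hmem (φ j))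
      simp only [hudef, hGdef, hBdef] at *
      have h4 : (F (v (φ j) q) + c)/c₁ = F (v (φ j) q)/c₁ + c/c₁ := by ring
      linarith [h4 ▸ h2]
    have hu_nonneg : ∀ j q, 0 ≤ u j q := fun j q => norm_nonneg _
    have hu_int : ∀ j, Integrable (u j) μ := by
      intro j
      have h1 : MemLp (fun q => v (φ j) q - vlim q) pp μ := (hmem (φ j)).sub hmeml
      exact (memLp_one_iff_integrable.1 (h1.mono_exponent hpp1)).norm
    have hB_int : Integrable B μ := by
      have h1 : Integrable (fun q => ‖vlim q‖) μ :=
        memLp_one_iff_integrable.1 ((hmeml.norm).mono_exponent hpp1)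
      exact (integrable_const (1 + c/c₁)).add h1
    have hG_int : ∀ j, Integrable (G j) μ := fun j =>
      hB_int.add ((int_Fv (φ j)).div_const c₁)
    have hGl_int : Integrable Gl μ := hB_int.add (int_Fl.div_const c₁)
    have hW_nonneg : ∀ j q, 0 ≤ G j q - u j q := fun j q => by linarith [hdom j q]
    -- integral of G j converges to integral of Gl
    have hGint : Tendsto (fun j => ∫ q, G j q ∂μ) atTop (nhds (∫ q, Gl q ∂μ)) := by
      have e1 : ∀ j, ∫ q, G j q ∂μ = (∫ q, B q ∂μ) + (∫ q, F (v (φ j) q) ∂μ)/c₁ := by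
        intro j
        rw [hGdef]
        rw [integral_add hB_int ((int_Fv (φ j)).div_const c₁), integral_div]
      have e2 : ∫ q, Gl q ∂μ = (∫ q, B q ∂μ) + (∫ q, F (vlim q) ∂μ)/c₁ := by
        rw [hGldef, integral_add hB_int (int_Fl.div_const c₁), integral_div]
      simp only [e1, e2]
      exact tendsto_const_nhds.add ((hF.comp hφmono.tendsto_atTop).div_const c₁)
    -- lintegral versions
    set uI : ℕ → ℝ≥0∞ := fun j => ∫⁻ q, ENNReal.ofReal (u j q) ∂μ with huIdef
    set wI : ℕ → ℝ≥0∞ := fun j => ∫⁻ q, ENNReal.ofReal (G j q - u j q) ∂μ with hwIdef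
    set gI : ℕ → ℝ≥0∞ := fun j => ∫⁻ q, ENNReal.ofReal (G j q) ∂μ with hgIdef
    have hsplit : ∀ j, uI j + wI j = gI j := by
      intro j
      simp only [huIdef, hwIdef, hgIdef]
      rw [← lintegral_add_left' ((hu_int j).aestronglyMeasurable.aemeasurable.ennreal_ofReal)]
      congr 1
      funext q
      rw [← ENNReal.ofReal_add (hu_nonneg j q) (hW_nonneg j q)]
      congr 1
      ring
    have hgIfin : ∀ j, gI j ≠ ⊤ := by
      intro j
      simp only [hgIdef]
      rw [← ofReal_integral_eq_lintegral_ofReal (hG_int j)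
        (ae_of_all _ fun q => le_trans (hu_nonneg j q) (hdom j q))]
      exact ENNReal.ofReal_ne_top
    have hgItend : Tendsto gI atTop (nhds (ENNReal.ofReal (∫ q, Gl q ∂μ))) := by
      have e : gI = fun j => ENNReal.ofReal (∫ q, G j q ∂μ) := by
        funext j
        simp only [hgIdef]
        rw [← ofReal_integral_eq_lintegral_ofReal (hG_int j)
          (ae_of_all _ fun q => le_trans (hu_nonneg j q) (hdom j q))]
      rw [e]
      exact (ENNReal.continuous_ofReal.tendsto _).comp hGint
    -- Fatou for the W's
    have hWtend : ∀ᵐ q ∂μ, Tendsto (fun j => ENNReal.ofReal (G j q - u j q)) atTop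
        (nhds (ENNReal.ofReal (Gl q))) := by
      filter_upwards [haecv] with q hq
      have h1 : Tendsto (fun j => u j q) atTop (nhds 0) := by
        simp only [hudef]
        exact tendsto_iff_norm_sub_tendsto_zero.1 hq
      have h2 : Tendsto (fun j => G j q) atTop (nhds (Gl q)) := by
        simp only [hGdef, hGldef]
        exact tendsto_const_nhds.add (((hFc.tendsto (vlim q)).comp hq).div_const c₁)
      have h3 := h2.sub h1
      rw [sub_zero] at h3
      exact (ENNReal.continuous_ofReal.tendsto _).comp h3
    have hfatou : ENNReal.ofReal (∫ q, Gl q ∂μ) ≤ liminf wI atTop := by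
      have h1 : ENNReal.ofReal (∫ q, Gl q ∂μ) = ∫⁻ q, ENNReal.ofReal (Gl q) ∂μ :=
        ofReal_integral_eq_lintegral_ofReal hGl_int
          (ae_of_all _ fun q => by
            have h2 := hcnneg (vlim q)
            have h3 : 0 ≤ (F (vlim q) + c)/c₁ := div_nonneg (by linarith) hc₁.le
            have h4 : (F (vlim q) + c)/c₁ = F (vlim q)/c₁ + c/c₁ := by ring
            simp only [hGldef, hBdef, Pi.zero_apply]
            linarith [norm_nonneg (vlim q)])
      rw [h1]
      have h2 : ∫⁻ q, ENNReal.ofReal (Gl q) ∂μ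
          = ∫⁻ q, liminf (fun j => ENNReal.ofReal (G j q - u j q)) atTop ∂μ := by
        refine lintegral_congr_ae ?_
        filter_upwards [hWtend] with q hq
        exact hq.liminf_eq.symm
      rw [h2, hwIdef]
      exact lintegral_liminf_le' fun j =>
        (((hG_int j).sub (hu_int j)).aestronglyMeasurable.aemeasurable).ennreal_ofReal
    -- conclude uI → 0
    have huI0 : Tendsto uI atTop (nhds 0) := by
      rw [ENNReal.tendsto_atTop_zero]
      intro ε hε
      set γ := ENNReal.ofReal (∫ q, Gl q ∂μ) with hγdef
      have hγfin : γ ≠ ⊤ := ENNReal.ofReal_ne_top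
      have hε2 : (0:ℝ≥0∞) < ε/2 := ENNReal.div_pos hε.ne' (by norm_num)
      have hev1 : ∀ᶠ j in atTop, gI j ≤ γ + ε/2 := by
        have : γ < γ + ε/2 := ENNReal.lt_add_right hγfin hε2.ne'
        filter_upwards [hgItend.eventually_lt_const this] with j hj
        exact hj.le
      have hev2 : ∀ᶠ j in atTop, γ ≤ wI j + ε/2 := by
        rcases le_or_gt γ (ε/2) with h | h
        · exact Eventually.of_forall fun j => le_trans h le_add_self
        · have hγ0 : γ ≠ 0 := (hε2.trans h).ne'
          have h1 : γ - ε/2 < liminf wI atTop :=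
            lt_of_lt_of_le (ENNReal.sub_lt_self hγfin hγ0 hε2.ne') hfatou
          filter_upwards [Filter.eventually_lt_of_lt_liminf h1] with j hj
          have h3 : γ - ε/2 + ε/2 ≤ wI j + ε/2 := add_le_add_left hj.le _
          rwa [tsub_add_cancel_of_le h.le] at h3
      rw [eventually_atTop] at hev1 hev2
      obtain ⟨N1, hN1⟩ := hev1
      obtain ⟨N2, hN2⟩ := hev2
      refine ⟨max N1 N2, fun j hj => ?_⟩
      have h1 := hN1 j (le_trans (le_max_left _ _) hj)
      have h2 := hN2 j (le_trans (le_max_right _ _) hj)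
      have h3 : uI j + wI j ≤ wI j + ε := by
        rw [hsplit j]
        calc gI j ≤ γ + ε/2 := h1
          _ ≤ (wI j + ε/2) + ε/2 := add_le_add_left h2 _
          _ = wI j + ε := by rw [add_assoc, ENNReal.add_halves]
      have hwfin : wI j ≠ ⊤ := by
        intro hcon
        apply hgIfin j
        rw [← hsplit j, hcon, add_top]
      rw [add_comm (uI j) (wI j)] at h3
      exact (ENNReal.add_le_add_iff_left hwfin).1 h3
    -- back to real integrals
    have hureal : ∀ j, ∫ q, u j q ∂μ = (uI j).toReal := by
      intro j
      simp only [huIdef]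
      rw [integral_eq_lintegral_of_nonneg_ae (ae_of_all _ (hu_nonneg j))
        (hu_int j).aestronglyMeasurable]
    have h5 := (ENNReal.tendsto_toReal (by simp : (0:ℝ≥0∞) ≠ ⊤)).comp huI0
    have h6 : Tendsto (fun j => ∫ q, u j q ∂μ) atTop (nhds 0) := by
      simpa using h5.congr fun j => (hureal j).symm
    exact h6
  exact ⟨φ, hφmono, haecv, hL1⟩
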